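/- Let R be a commutative Noetherian ring and M, N finitely generated R-modules. Choose a presentation F_1 →^f F_0 → M → 0 of M by finitely generated free R-modules and let Tr M = coker(f* : Hom_R(F_0,R) → Hom_R(F_1,R)) be the Auslander–Bridger transpose. Let λ_{M,N} : Hom_R(M,R) ⊗_R N → Hom_R(M,N) be the natural map sending φ ⊗ y to (x ↦ φ(x)·y). Then the cokernel of λ_{M,N} (which equals Hom_R(M,N) modulo the submodule of homomorphisms factoring through a projective R-module) is isomorphic to Tor_1^R(Tr M, N). -/

import Mathlib

open CategoryTheory

noncomputable section

open LinearMap TensorProduct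

open LinearMap TensorProduct

section Chase
variable {R : Type} [CommRing R]

set_option linter.unusedSectionVars false

private lemma comm_rl {X Y P Q : Type}
    [AddCommGroup X] [AddCommGroup Y] [AddCommGroup P] [AddCommGroup Q]
    [Module R X] [Module R Y] [Module R P] [Module R Q]
    (w : X →ₗ[R] Y) (d : P →ₗ[R] Q) (x : X ⊗[R] P) :
    rTensor Q w (lTensor X d x) = lTensor Y d (rTensor P w x) := by
  rw [← LinearMap.comp_apply, rTensor_comp_lTensor, ← lTensor_comp_rTensor,
    LinearMap.comp_apply]

variable {Md A B N Q0 Q1 Q2 : Type}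
  [AddCommGroup Md] [AddCommGroup A] [AddCommGroup B] [AddCommGroup N]
  [AddCommGroup Q0] [AddCommGroup Q1] [AddCommGroup Q2]
  [Module R Md] [Module R A] [Module R B] [Module R N]
  [Module R Q0] [Module R Q1] [Module R Q2]
  [Module.Flat R A] [Module.Flat R B] [Module.Flat R Q0]

instance quotTensorACG {Q : Type} [AddCommGroup Q] [Module R Q] (p : Submodule R B) :
    AddCommGroup ((B ⧸ p) ⊗[R] Q) := TensorProduct.addCommGroup

set_option maxHeartbeats 2000000 in
theorem chase
    (u : A →ₗ[R] B) (v : Md →ₗ[R] A) (hvu : Function.Exact v u)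
    (d21 : Q2 →ₗ[R] Q1) (d10 : Q1 →ₗ[R] Q0) (π0 : Q0 →ₗ[R] N)
    (h21 : Function.Exact d21 d10) (h10 : Function.Exact d10 π0)
    (hπ0 : Function.Surjective π0)
    (ht2 : ∀ x, lTensor (B ⧸ range u) d21 x ∈ ker (lTensor (B ⧸ range u) d10))
    (ht0 : ∀ x, rTensor N v x ∈ ker (rTensor N u)) :
    Nonempty (
      ((ker (lTensor (B ⧸ range u) d10)) ⧸
        (range ((lTensor (B ⧸ range u) d21).codRestrict _ ht2))) ≃ₗ[R]
      ((ker (rTensor N u)) ⧸ (range ((rTensor N v).codRestrict _ ht0)))) := by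
  set T := B ⧸ range u with hT
  set pT : B →ₗ[R] T := (range u).mkQ with hpT
  set t2 := (lTensor T d21).codRestrict _ ht2 with hdt2
  set t0' := (rTensor N v).codRestrict _ ht0 with hdt0
  have hupT : Function.Exact u pT := exact_map_mkQ_range u
  have hpTsurj : Function.Surjective pT := Submodule.mkQ_surjective _
  have E10 : Function.Exact (rTensor Q0 u) (rTensor Q0 pT) :=
    rTensor_exact Q0 hupT hpTsurj
  have E11 : Function.Exact (rTensor Q1 u) (rTensor Q1 pT) :=
    rTensor_exact Q1 hupT hpTsurj
  have E2 : Function.Exact (rTensor Q0 v) (rTensor Q0 u) :=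
    Module.Flat.rTensor_exact Q0 hvu
  have E3 : Function.Exact (lTensor A d10) (lTensor A π0) :=
    Module.Flat.lTensor_exact A h10
  have E4 : Function.Exact (lTensor B d21) (lTensor B d10) :=
    Module.Flat.lTensor_exact B h21
  have E5 : Function.Exact (lTensor B d10) (lTensor B π0) :=
    Module.Flat.lTensor_exact B h10
  have S1 : ∀ (X : Type) [AddCommGroup X] [Module R X],
      Function.Surjective (rTensor X pT) := fun X _ _ => rTensor_surjective X hpTsurj
  have S2 : ∀ (X : Type) [AddCommGroup X] [Module R X],
      Function.Surjective (lTensor X π0) := fun X _ _ => lTensor_surjective X hπ0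
  have hpTu : ∀ (X : Type) [AddCommGroup X] [Module R X] (x : A ⊗[R] X),
      rTensor X pT (rTensor X u x) = 0 := by
    intro X _ _ x
    rw [← LinearMap.comp_apply, ← rTensor_comp]
    have h : pT ∘ₗ u = 0 := by
      ext a
      show pT (u a) = 0
      rw [hpT, Submodule.mkQ_apply]
      exact (Submodule.Quotient.mk_eq_zero _).mpr (LinearMap.mem_range_self u a)
    rw [h, rTensor_zero, LinearMap.zero_apply]
  have huv : ∀ (X : Type) [AddCommGroup X] [Module R X] (x : Md ⊗[R] X),
      rTensor X u (rTensor X v x) = 0 := by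
    intro X _ _ x
    rw [← LinearMap.comp_apply, ← rTensor_comp]
    have h : u ∘ₗ v = 0 := by ext m; simp [hvu.apply_apply_eq_zero]
    rw [h, rTensor_zero, LinearMap.zero_apply]
  have hπd : ∀ (X : Type) [AddCommGroup X] [Module R X] (x : X ⊗[R] Q1),
      lTensor X π0 (lTensor X d10 x) = 0 := by
    intro X _ _ x
    rw [← LinearMap.comp_apply, ← lTensor_comp]
    have h : π0 ∘ₗ d10 = 0 := by ext m; simp [h10.apply_apply_eq_zero]
    rw [h, lTensor_zero, LinearMap.zero_apply]
  have hdd : ∀ (x : B ⊗[R] Q2), lTensor B d10 (lTensor B d21 x) = 0 := by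
    intro x
    rw [← LinearMap.comp_apply, ← lTensor_comp]
    have h : d10 ∘ₗ d21 = 0 := by ext m; simp [h21.apply_apply_eq_zero]
    rw [h, lTensor_zero, LinearMap.zero_apply]
  -- picks
  have exists_pick : ∀ t : ker (lTensor T d10), ∃ (b : B ⊗[R] Q1) (a : A ⊗[R] Q0),
      rTensor Q1 pT b = (t : T ⊗[R] Q1) ∧ rTensor Q0 u a = lTensor B d10 b := by
    intro t
    obtain ⟨b, hb⟩ := S1 Q1 (t : T ⊗[R] Q1)
    have h0 : rTensor Q0 pT (lTensor B d10 b) = 0 := by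
      rw [comm_rl, hb]
      exact t.2
    obtain ⟨a, ha⟩ := (E10 _).mp h0
    exact ⟨b, a, hb, ha⟩
  choose pb pa hpb hpa using exists_pick
  -- independence of choices
  have key : ∀ (b b' : B ⊗[R] Q1) (a a' : A ⊗[R] Q0),
      rTensor Q1 pT b = rTensor Q1 pT b' →
      rTensor Q0 u a = lTensor B d10 b → rTensor Q0 u a' = lTensor B d10 b' →
      lTensor A π0 a - lTensor A π0 a' ∈ range (rTensor N v) := by
    intro b b' a a' hbb ha ha'
    have hker : rTensor Q1 pT (b - b') = 0 := by rw [map_sub, hbb, sub_self]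
    obtain ⟨c, hc⟩ := (E11 _).mp hker
    have h2 : rTensor Q0 u (a - a' - lTensor A d10 c) = 0 := by
      rw [map_sub, map_sub, ha, ha', comm_rl, hc, map_sub, sub_self]
    obtain ⟨m, hm⟩ := (E2 _).mp h2
    refine ⟨lTensor Md π0 m, ?_⟩
    rw [comm_rl, hm, map_sub, map_sub, hπd, sub_zero]
  have hmem : ∀ t, lTensor A π0 (pa t) ∈ ker (rTensor N u) := by
    intro t
    rw [mem_ker, comm_rl, hpa t]
    exact hπd B (pb t)
  set θraw : ker (lTensor T d10) → (ker (rTensor N u) ⧸ range t0') :=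
    fun t => Submodule.Quotient.mk ⟨lTensor A π0 (pa t), hmem t⟩ with hθraw
  have memrange : ∀ (z w : ker (rTensor N u)),
      ((z : A ⊗[R] N) - w ∈ range (rTensor N v)) →
      (Submodule.Quotient.mk z : _ ⧸ range t0') = Submodule.Quotient.mk w := by
    intro z w h
    rw [Submodule.Quotient.eq]
    rw [hdt0, range_codRestrict, Submodule.mem_comap]
    exact h
  have θcong : ∀ (t : ker (lTensor T d10)) (b : B ⊗[R] Q1) (a : A ⊗[R] Q0)
      (z : ker (rTensor N u)),
      rTensor Q1 pT b = (t : T ⊗[R] Q1) → rTensor Q0 u a = lTensor B d10 b →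
      (z : A ⊗[R] N) = lTensor A π0 a →
      θraw t = Submodule.Quotient.mk z := by
    intro t b a z hb' ha' hz
    refine memrange _ _ ?_
    have := key (pb t) b (pa t) a (by rw [hpb t, hb']) (hpa t) ha'
    simpa [hz] using this
  have θadd : ∀ s t, θraw (s + t) = θraw s + θraw t := by
    intro s t
    have h := θcong (s + t) (pb s + pb t) (pa s + pa t)
      ⟨lTensor A π0 (pa s) + lTensor A π0 (pa t), add_mem (hmem s) (hmem t)⟩
      (by rw [map_add, hpb s, hpb t]; rfl)
      (by rw [map_add, hpa s, hpa t, map_add])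
      (by rw [map_add])
    rw [h]
    rfl
  have θsmul : ∀ (r : R) t, θraw (r • t) = r • θraw t := by
    intro r t
    have h := θcong (r • t) (r • pb t) (r • pa t)
      ⟨r • lTensor A π0 (pa t), Submodule.smul_mem _ r (hmem t)⟩
      (by rw [map_smul, hpb t]; rfl)
      (by rw [map_smul, hpa t, map_smul])
      (by rw [map_smul])
    rw [h]
    rfl
  set θ : ker (lTensor T d10) →ₗ[R] (ker (rTensor N u) ⧸ range t0') :=
    { toFun := θraw, map_add' := θadd, map_smul' := θsmul } with hθ
  have hkill : range t2 ≤ ker θ := by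
    rintro _ ⟨s, rfl⟩
    obtain ⟨b2, hb2⟩ := S1 Q2 s
    have h := θcong (t2 s) (lTensor B d21 b2) 0 0
      (by rw [comm_rl, hb2]; rfl)
      (by rw [map_zero, hdd])
      (by rw [map_zero]; rfl)
    rw [mem_ker, hθ]
    show θraw (t2 s) = 0
    rw [h, Submodule.Quotient.mk_zero]
  have hsurj : Function.Surjective θ := by
    intro y
    obtain ⟨z, rfl⟩ := Submodule.Quotient.mk_surjective _ y
    obtain ⟨a, haz⟩ := S2 A (z : A ⊗[R] N)
    have h0 : lTensor B π0 (rTensor Q0 u a) = 0 := by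
      rw [← comm_rl, haz]
      exact z.2
    obtain ⟨b, hbz⟩ := (E5 _).mp h0
    have htker : rTensor Q1 pT b ∈ ker (lTensor T d10) := by
      rw [mem_ker, ← comm_rl, hbz, hpTu]
    refine ⟨⟨rTensor Q1 pT b, htker⟩, ?_⟩
    exact θcong _ b a z rfl hbz.symm haz.symm
  have hker : ker θ ≤ range t2 := by
    intro t ht
    rw [mem_ker] at ht
    have h0 : lTensor A π0 (pa t) ∈ range (rTensor N v) := by
      have := (Submodule.Quotient.mk_eq_zero _).mp ht
      rw [hdt0, range_codRestrict, Submodule.mem_comap] at this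
      exact this
    obtain ⟨n', hn'⟩ := h0
    obtain ⟨n, hn⟩ := S2 Md n'
    have h1 : lTensor A π0 (pa t - rTensor Q0 v n) = 0 := by
      rw [map_sub, ← comm_rl, hn, hn', sub_self]
    obtain ⟨abar, habar⟩ := (E3 _).mp h1
    have h2 : lTensor B d10 (pb t - rTensor Q1 u abar) = 0 := by
      rw [map_sub, ← hpa t, ← comm_rl, habar, map_sub, huv, sub_zero, sub_self]
    obtain ⟨b2, hb2⟩ := (E4 _).mp h2
    refine ⟨rTensor Q2 pT b2, ?_⟩
    apply Subtype.ext
    show lTensor T d21 (rTensor Q2 pT b2) = (t : T ⊗[R] Q1)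
    rw [← comm_rl, hb2, map_sub, hpTu, sub_zero, hpb t]
  have hinj : Function.Injective ((range t2).liftQ θ hkill) := by
    rw [← ker_eq_bot]
    exact Submodule.ker_liftQ_eq_bot _ _ _ hker
  have hsurj' : Function.Surjective ((range t2).liftQ θ hkill) := by
    intro y
    obtain ⟨t, ht⟩ := hsurj y
    exact ⟨Submodule.Quotient.mk t, by rw [Submodule.liftQ_apply]; exact ht⟩
  exact ⟨LinearEquiv.ofBijective ((range t2).liftQ θ hkill) ⟨hinj, hsurj'⟩⟩

end Chase
open LinearMap TensorProduct

theorem alg1abs {R : Type} [CommRing R] {M N A B DM : Type}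
    [AddCommGroup M] [AddCommGroup N] [AddCommGroup A] [AddCommGroup B] [AddCommGroup DM]
    [Module R M] [Module R N] [Module R A] [Module R B] [Module R DM]
    (u : A →ₗ[R] B) (v : DM →ₗ[R] A)
    (lam : DM ⊗[R] N →ₗ[R] (M →ₗ[R] N))
    (ε : (M →ₗ[R] N) →ₗ[R] A ⊗[R] N)
    (hεinj : Function.Injective ε)
    (hεrange : range ε = ker (rTensor N u))
    (hcomm : ε ∘ₗ lam = rTensor N v)
    (ht0 : ∀ x, rTensor N v x ∈ ker (rTensor N u)) :
    Nonempty (((M →ₗ[R] N) ⧸ range lam) ≃ₗ[R]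
      ((ker (rTensor N u)) ⧸ (range ((rTensor N v).codRestrict _ ht0)))) := by
  set εker : (M →ₗ[R] N) ≃ₗ[R] ker (rTensor N u) :=
    (LinearEquiv.ofInjective ε hεinj).trans (LinearEquiv.ofEq _ _ hεrange) with hεker
  have hcoe : ∀ h : M →ₗ[R] N, (εker h : A ⊗[R] N) = ε h := fun h => rfl
  have hmap : Submodule.map (εker : (M →ₗ[R] N) →ₗ[R] ker (rTensor N u)) (range lam) =
      range ((rTensor N v).codRestrict _ ht0) := by
    ext z
    rw [range_codRestrict, Submodule.mem_comap]
    constructor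
    · rintro ⟨-, ⟨w, rfl⟩, rfl⟩
      refine ⟨w, ?_⟩
      rw [← hcomm]
      exact (hcoe (lam w)).symm
    · rintro ⟨w, hw⟩
      refine ⟨lam w, ⟨w, rfl⟩, ?_⟩
      apply Subtype.ext
      rw [LinearEquiv.coe_coe, hcoe, ← LinearMap.comp_apply, hcomm]
      exact hw
  exact ⟨Submodule.Quotient.equiv _ _ εker hmap⟩

set_option maxHeartbeats 1000000 in
theorem eps_exists {R : Type} [CommRing R]
    {M N : Type} [AddCommGroup M] [AddCommGroup N] [Module R M] [Module R N]
    {n0 n1 : ℕ} (f : (Fin n1 → R) →ₗ[R] (Fin n0 → R)) (g : (Fin n0 → R) →ₗ[R] M)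
    (hg : Function.Surjective g) (hfg : Function.Exact f g) :
    ∃ ε : (M →ₗ[R] N) →ₗ[R] (Module.Dual R (Fin n0 → R)) ⊗[R] N,
      Function.Injective ε ∧
      range ε = ker (rTensor N (f.dualMap)) ∧
      ε ∘ₗ dualTensorHom R M N = rTensor N (g.dualMap) := by
  set F0 := Fin n0 → R with hF0
  set F1 := Fin n1 → R with hF1
  set e0 := dualTensorHomEquiv R F0 N with he0
  set e1 := dualTensorHomEquiv R F1 N with he1
  have he0app : ∀ x, e0 x = dualTensorHom R F0 N x := fun x =>
    rfl
  have he1app : ∀ x, e1 x = dualTensorHom R F1 N x := fun x =>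
    rfl
  set ε : (M →ₗ[R] N) →ₗ[R] Module.Dual R F0 ⊗[R] N :=
    e0.symm.toLinearMap ∘ₗ (lcomp R N g) with hε
  have hεval : ∀ h : M →ₗ[R] N, e0 (ε h) = h.comp g := fun h =>
    e0.apply_symm_apply _
  have key1 : ∀ x : Module.Dual R F0 ⊗[R] N,
      e1 (rTensor N (f.dualMap) x) = (e0 x).comp f := by
    intro x
    rw [he1app, he0app]
    induction x using TensorProduct.induction_on with
    | zero => simp
    | tmul φ n =>
      ext y
      rfl
    | add a b ha hb => rw [map_add, map_add, ha, hb, map_add, LinearMap.add_comp]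
  have εinj : Function.Injective ε := by
    intro h1 h2 hh
    have hcg : h1.comp g = h2.comp g := by
      have := congrArg e0 hh
      rwa [hεval, hεval] at this
    ext m
    obtain ⟨y, rfl⟩ := hg m
    exact DFunLike.congr_fun hcg y
  have hrange : range ε = ker (rTensor N (f.dualMap)) := by
    ext x
    constructor
    · rintro ⟨h, rfl⟩
      rw [mem_ker]
      apply e1.injective
      rw [key1, map_zero, hεval]
      ext y
      simp [LinearMap.comp_apply, hfg.apply_apply_eq_zero]
    · intro hx
      rw [mem_ker] at hx
      have h1 : (e0 x).comp f = 0 := by rw [← key1, hx, map_zero]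
      have hle : ker g ≤ ker (e0 x) := by
        intro y hy
        rw [mem_ker] at hy ⊢
        obtain ⟨z, rfl⟩ := (hfg y).mp hy
        exact DFunLike.congr_fun h1 z
      set e := g.quotKerEquivOfSurjective hg with he
      have he' : ∀ y, e (Submodule.Quotient.mk y) = g y := by
        intro y
        simp only [he, LinearMap.quotKerEquivOfSurjective, LinearEquiv.trans_apply,
          LinearEquiv.ofTop_apply, LinearMap.quotKerEquivRange_apply_mk]
      have hes : ∀ y, e.symm (g y) = Submodule.Quotient.mk y := by
        intro y
        rw [← he' y, e.symm_apply_apply]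
      refine ⟨((ker g).liftQ (e0 x) hle) ∘ₗ e.symm.toLinearMap, ?_⟩
      apply e0.injective
      rw [hεval]
      refine LinearMap.ext fun y => ?_
      simp only [LinearMap.comp_apply, LinearEquiv.coe_toLinearMap, hes,
        Submodule.liftQ_apply]
  refine ⟨ε, εinj, hrange, ?_⟩
  apply TensorProduct.ext'
  intro φ n
  apply e0.injective
  rw [LinearMap.comp_apply, hεval, he0app]
  ext y
  rfl
open CategoryTheory LinearMap TensorProduct

theorem exact_dual {R : Type} [CommRing R] {P Q M : Type}
    [AddCommGroup P] [AddCommGroup Q] [AddCommGroup M]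
    [Module R P] [Module R Q] [Module R M]
    (f : P →ₗ[R] Q) (g : Q →ₗ[R] M)
    (hg : Function.Surjective g) (hfg : Function.Exact f g) :
    Function.Exact (g.dualMap) (f.dualMap) := by
  rw [LinearMap.exact_iff]
  ext φ
  rw [mem_ker]
  constructor
  · intro hφ
    have hle : ker g ≤ ker φ := by
      intro y hy
      rw [mem_ker] at hy ⊢
      obtain ⟨z, rfl⟩ := (hfg y).mp hy
      exact DFunLike.congr_fun hφ z
    set e := g.quotKerEquivOfSurjective hg with he
    have he' : ∀ y, e (Submodule.Quotient.mk y) = g y := by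
      intro y
      simp only [he, LinearMap.quotKerEquivOfSurjective, LinearEquiv.trans_apply,
        LinearEquiv.ofTop_apply, LinearMap.quotKerEquivRange_apply_mk]
    have hes : ∀ y, e.symm (g y) = Submodule.Quotient.mk y := by
      intro y
      rw [← he' y, e.symm_apply_apply]
    refine ⟨((ker g).liftQ φ hle) ∘ₗ e.symm.toLinearMap, ?_⟩
    refine LinearMap.ext fun y => ?_
    show (((ker g).liftQ φ hle) ∘ₗ e.symm.toLinearMap) (g y) = φ y
    simp only [LinearMap.comp_apply, LinearEquiv.coe_toLinearMap, hes,
      Submodule.liftQ_apply]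
  · rintro ⟨ψ, rfl⟩
    refine LinearMap.ext fun z => ?_
    show ψ (g (f z)) = 0
    rw [hfg.apply_apply_eq_zero, map_zero]

set_option maxHeartbeats 2000000 in
/-- Lemma 2.3: let `R` be commutative Noetherian, `M, N` finitely
generated `R`-modules and `F₁ →f F₀ →g M → 0` a finite free presentation.  Let
`Tr M = coker(f* : F₀* → F₁*)` be the Auslander–Bridger transpose.  Then the cokernel of
the natural map `λ : Hom_R(M,R) ⊗ N → Hom_R(M,N)`, `φ ⊗ y ↦ (x ↦ φ(x)y)` — that is,
`Hom_R(M,N)` modulo maps factoring through projectives — is isomorphic to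
`Tor₁^R(Tr M, N)`. -/
theorem stmt_9 (R : Type) [CommRing R] [IsNoetherianRing R]
    (M N : Type) [AddCommGroup M] [AddCommGroup N] [Module R M] [Module R N]
    [Module.Finite R M] [Module.Finite R N]
    (n0 n1 : ℕ) (f : (Fin n1 → R) →ₗ[R] (Fin n0 → R)) (g : (Fin n0 → R) →ₗ[R] M)
    (hg : Function.Surjective g) (hfg : Function.Exact f g) :
    Nonempty (
      ((M →ₗ[R] N) ⧸ LinearMap.range (dualTensorHom R M N)) ≃ₗ[R]
      ((Tor (ModuleCat R) 1).obj
        (ModuleCat.of R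
          (Module.Dual R (Fin n1 → R) ⧸ LinearMap.range f.dualMap))).obj
        (ModuleCat.of R N)) := by
  classical
  set T' : ModuleCat R :=
    ModuleCat.of R (Module.Dual R (Fin n1 → R) ⧸ LinearMap.range f.dualMap) with hT'
  set F : ModuleCat R ⥤ ModuleCat R := (MonoidalCategory.tensoringLeft (ModuleCat R)).obj T' with hF
  obtain ⟨Q⟩ := (inferInstance : HasProjectiveResolution (ModuleCat.of R N)).out
  set K := (F.mapHomologicalComplex (ComplexShape.down ℕ)).obj Q.complex with hK
  -- categorical iso from Tor to concrete homology
  have iso1 : ((Tor (ModuleCat R) 1).obj T').obj (ModuleCat.of R N) ≅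
      (HomologicalComplex.homologyFunctor (ModuleCat R) (ComplexShape.down ℕ) 1).obj K :=
    Q.isoLeftDerivedObj F 1
  have iso2 : (HomologicalComplex.homologyFunctor (ModuleCat R) (ComplexShape.down ℕ) 1).obj K ≅
      (K.sc' 2 1 0).homology :=
    K.homologyIsoSc' 2 1 0 (by simp) (by simp)
  have iso3 : (K.sc' 2 1 0).homology ≅ (K.sc' 2 1 0).moduleCatLeftHomologyData.H :=
    (K.sc' 2 1 0).moduleCatHomologyIso
  -- concrete boundary maps
  set d21κ : ↑(Q.complex.X 2) →ₗ[R] ↑(Q.complex.X 1) := (Q.complex.d 2 1).hom with hd21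
  set d10κ : ↑(Q.complex.X 1) →ₗ[R] ↑(Q.complex.X 0) := (Q.complex.d 1 0).hom with hd10
  have h21 : Function.Exact d21κ d10κ :=
    LinearMap.exact_iff.mpr ((Q.exact_succ 0).moduleCat_range_eq_ker).symm
  -- augmentation
  set siso := HomologicalComplex.singleObjXSelf (ComplexShape.down ℕ) 0 (ModuleCat.of R N)
    with hsiso
  set π0cat : Q.complex.X 0 ⟶ ModuleCat.of R N := Q.π.f 0 ≫ siso.hom with hπ0cat
  set π0κ : ↑(Q.complex.X 0) →ₗ[R] N := π0cat.hom with hπ0κ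
  have hπ0 : Function.Surjective π0κ := by
    have : Epi π0cat := epi_comp _ _
    exact (ModuleCat.epi_iff_surjective π0cat).mp this
  -- exactness at degree 0 via the cokernel cofork
  have h10 : Function.Exact d10κ π0κ := by
    have hcok := ModuleCat.cokernelIsColimit (Q.complex.d 1 0)
    have hcol := Q.isColimitCokernelCofork
    set φ := hcok.coconePointUniqueUpToIso hcol with hφdef
    have hφ : ModuleCat.ofHom (LinearMap.range d10κ).mkQ ≫ φ.hom = Q.π.f 0 :=
      hcok.comp_coconePointUniqueUpToIso_hom hcol Limits.WalkingParallelPair.one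
    set ψ := (φ ≪≫ siso).toLinearEquiv with hψdef
    intro y
    have happ : π0κ y = ψ ((LinearMap.range d10κ).mkQ y) := by
      have h1 : (ModuleCat.ofHom (LinearMap.range d10κ).mkQ ≫ φ.hom) y = (Q.π.f 0) y := by
        rw [hφ]
        rfl
      show siso.hom ((Q.π.f 0) y) = ψ ((LinearMap.range d10κ).mkQ y)
      rw [← h1]
      rfl
    constructor
    · intro hy
      have : ψ ((LinearMap.range d10κ).mkQ y) = 0 := by rw [← happ, hy]
      have h0 : (LinearMap.range d10κ).mkQ y = 0 := by
        apply ψ.injective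
        rw [this]
        exact (map_zero ψ).symm
      rw [Submodule.mkQ_apply, Submodule.Quotient.mk_eq_zero] at h0
      exact h0
    · rintro ⟨z, rfl⟩
      rw [happ, Submodule.mkQ_apply]
      rw [show (Submodule.Quotient.mk (d10κ z) :
        ↑(Q.complex.X 0) ⧸ LinearMap.range d10κ) = 0 from
        (Submodule.Quotient.mk_eq_zero _).mpr ⟨z, rfl⟩]
      exact map_zero ψ
  -- flatness of the resolution in degree 0
  have hproj0 : Module.Projective R ↑(Q.complex.X 0) :=
    (IsProjective.iff_projective _).mpr
      (inferInstanceAs (Projective (Q.complex.X 0)))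
  letI : Module.Projective R ↑(Q.complex.X 0) := hproj0
  -- zero-composite hypotheses
  set Tmod := Module.Dual R (Fin n1 → R) ⧸ LinearMap.range f.dualMap with hTmod
  have hddκ : d10κ ∘ₗ d21κ = 0 := congrArg ModuleCat.Hom.hom (Q.complex.d_comp_d 2 1 0)
  have ht2 : ∀ x, lTensor Tmod d21κ x ∈ ker (lTensor Tmod d10κ) := by
    intro x
    rw [mem_ker, ← LinearMap.comp_apply, ← lTensor_comp, hddκ, lTensor_zero, LinearMap.zero_apply]
  have hdualc : f.dualMap ∘ₗ g.dualMap = 0 := by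
    refine LinearMap.ext fun φ => LinearMap.ext fun z => ?_
    show φ (g (f z)) = 0
    rw [hfg.apply_apply_eq_zero, map_zero]
  have ht0 : ∀ x, rTensor N g.dualMap x ∈ ker (rTensor N f.dualMap) := by
    intro x
    rw [mem_ker, ← LinearMap.comp_apply, ← rTensor_comp, hdualc, rTensor_zero, LinearMap.zero_apply]
  have hvu : Function.Exact (g.dualMap) (f.dualMap) := exact_dual f g hg hfg
  obtain ⟨e2⟩ := chase (u := f.dualMap) (v := g.dualMap) hvu d21κ d10κ π0κ h21 h10 hπ0 ht2 ht0
  obtain ⟨ε, hεinj, hεr, hεc⟩ := eps_exists (N := N) f g hg hfg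
  obtain ⟨e1⟩ := alg1abs f.dualMap g.dualMap (dualTensorHom R M N) ε hεinj hεr hεc ht0
  exact ⟨e1.trans (e2.symm.trans ((iso1 ≪≫ iso2 ≪≫ iso3).toLinearEquiv.symm))⟩
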